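/- arXiv:math/0511425 — 2 statements merged into one kernel-verified Lean document; each statement's English description precedes it below -/
import Mathlib

section
/- Define A_0 = 00 and A_{n+1} = 0·μ²(A_n). Then for all n ≥ 0, A_n is a proper prefix of A_{n+1}. -/
/-- The Thue-Morse morphism: μ(0)=01, μ(1)=10, with 0 = `false`, 1 = `true`. -/
def mu (w : List Bool) : List Bool := w.flatMap fun b => [b, !b]

/-- A₀ = 00, Aₙ₊₁ = 0·μ²(Aₙ). -/
def A : ℕ → List Bool
  | 0 => [false, false]
  | n + 1 => false :: mu (mu (A n))

lemma mu_append (u v : List Bool) : mu (u ++ v) = mu u ++ mu v := by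
  simp [mu]

lemma mu_prefix {u v : List Bool} (h : u <+: v) : mu u <+: mu v := by
  obtain ⟨t, rfl⟩ := h
  exact ⟨mu t, (mu_append u t).symm⟩

lemma mu_length (w : List Bool) : (mu w).length = 2 * w.length := by
  induction w with
  | nil => simp [mu]
  | cons b t ih => simp [mu] at ih ⊢; omega

lemma A_length (n : ℕ) : 0 < (A n).length := by
  induction n with
  | zero => simp [A]
  | succ n ih => simp [A]

theorem A_proper_prefix (n : ℕ) : A n <+: A (n + 1) ∧ A n ≠ A (n + 1) := by
  constructor
  · induction n with
    | zero => decide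
    | succ n ih =>
      show (false :: mu (mu (A n))) <+: (false :: mu (mu (A (n+1))))
      exact List.cons_prefix_cons.mpr ⟨rfl, mu_prefix (mu_prefix ih)⟩
  · intro h
    have := congrArg List.length h
    have h2 : (A (n+1)).length = 2 * (2 * (A n).length) + 1 := by
      simp [A, mu_length]
    have := A_length n
    omega
end

section
/- Define A_0 = 00 and A_{n+1} = 0·μ²(A_n). Then for every n ≥ 0, the word A_n is 7/3 power-free: no subword u of A_n has a period p with 3|u| ≥ 7p. -/
/-- `u` has period `p`: u(i) = u(i+p) for all valid indices. -/
def HasPeriod (u : List Bool) (p : ℕ) : Prop :=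
  ∀ i, i + p < u.length → u.getD i false = u.getD (i + p) false

/-! ### Auxiliary machinery -/

/-- `Win s a l p`: the window of `s` of length `l` starting at position `a`
is inside `s` and has period `p`. -/
def Win (s : List Bool) (a l p : ℕ) : Prop :=
  a + l ≤ s.length ∧
    ∀ i, a ≤ i → i + p < a + l → s.getD i false = s.getD (i + p) false

/-- Window-based 7/3-power-freeness. -/
def WFree (w : List Bool) : Prop :=
  ∀ a l p, 1 ≤ p → Win w a l p → 3 * l < 7 * p

lemma mu_cons (b : Bool) (t : List Bool) : mu (b :: t) = b :: (!b) :: mu t := rfl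

lemma mu_getD (z : List Bool) (i : ℕ) (h : i < 2 * z.length) :
    (mu z).getD i false =
      if i % 2 = 0 then z.getD (i / 2) false else !(z.getD (i / 2) false) := by
  induction z generalizing i with
  | nil => simp at h
  | cons b t ih =>
    match i with
    | 0 => simp [mu_cons]
    | 1 => simp [mu_cons]
    | (k+2) =>
      have hk : k < 2 * t.length := by simp at h; omega
      have h2 : (k+2) % 2 = k % 2 := by omega
      have h3 : (k+2) / 2 = k / 2 + 1 := by omega
      rw [mu_cons, List.getD_cons_succ, List.getD_cons_succ, ih k hk, h2, h3,
        List.getD_cons_succ]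

/-- Adjacent letters of `mu z` at an even position differ. -/
lemma mu_adj (z : List Bool) (i : ℕ) (hi : i % 2 = 0) (h : i + 1 < 2 * z.length) :
    (mu z).getD i false ≠ (mu z).getD (i+1) false := by
  have h1 : (i+1) % 2 = 1 := by omega
  have h2 : (i+1) / 2 = i / 2 := by omega
  rw [mu_getD z i (by omega), mu_getD z (i+1) (by omega), h1, h2, hi]
  simp

lemma win_cons {b : Bool} {l : List Bool} {a L p : ℕ} (h : Win l a L p) :
    Win (b :: l) (a+1) L p := by
  obtain ⟨h1, h2⟩ := h
  refine ⟨by simp; omega, fun i hi hip => ?_⟩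
  obtain ⟨j, rfl⟩ : ∃ j, i = j + 1 := ⟨i - 1, by omega⟩
  have := h2 j (by omega) (by omega)
  have e : j + 1 + p = (j + p) + 1 := by omega
  rw [e, List.getD_cons_succ, List.getD_cons_succ]
  exact this

lemma win_tail {b : Bool} {l : List Bool} {a L p : ℕ} (h : Win (b :: l) (a+1) L p) :
    Win l a L p := by
  obtain ⟨h1, h2⟩ := h
  refine ⟨by simp at h1; omega, fun i hi hip => ?_⟩
  have := h2 (i+1) (by omega) (by omega)
  have e : i + 1 + p = (i + p) + 1 := by omega
  rw [e, List.getD_cons_succ, List.getD_cons_succ] at this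
  exact this

/-- De-substitution for even periods: a window of `mu z` with period `2q`
yields a window of `z` with period `q` (and about half the length). -/
lemma mu_win_even (z : List Bool) (a l q : ℕ) (hq : 1 ≤ q) (hl : 2*q + 1 ≤ l)
    (hw : Win (mu z) a l (2*q)) :
    ∃ m, m = (a + l - 1 - 2*q)/2 - a/2 + 1 + q ∧ Win z (a/2) m q := by
  obtain ⟨hlen, hper⟩ := hw
  rw [mu_length] at hlen
  set K := (a + l - 1 - 2*q)/2 with hK
  refine ⟨K - a/2 + 1 + q, rfl, ⟨by omega, fun k hk hkq => ?_⟩⟩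
  have hkK : k ≤ K := by omega
  have hzk : 2*(k+q) < a + l := by omega
  rcases le_or_gt a (2*k) with hc | hc
  · -- use even position 2k
    have e := hper (2*k) hc (by omega)
    rw [mu_getD z (2*k) (by omega), mu_getD z (2*k + 2*q) (by omega)] at e
    have p1 : (2*k) % 2 = 0 := by omega
    have p2 : (2*k + 2*q) % 2 = 0 := by omega
    have q1 : (2*k) / 2 = k := by omega
    have q2 : (2*k + 2*q) / 2 = k + q := by omega
    rw [p1, p2, q1, q2] at e
    simpa using e
  · -- then a = 2k+1 : use odd position 2k+1
    have ha : a = 2*k + 1 := by omega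
    have e := hper (2*k+1) (by omega) (by omega)
    rw [mu_getD z (2*k+1) (by omega), mu_getD z (2*k+1 + 2*q) (by omega)] at e
    have p1 : (2*k+1) % 2 = 1 := by omega
    have p2 : (2*k+1 + 2*q) % 2 = 1 := by omega
    have q1 : (2*k+1) / 2 = k := by omega
    have q2 : (2*k+1 + 2*q) / 2 = k + q := by omega
    rw [p1, p2, q1, q2] at e
    cases h1 : z.getD k false <;> cases h2 : z.getD (k+q) false <;> simp_all

/-- One step relation for odd periods: under suitable range conditions,
two consecutive letters of `z` agree. -/
lemma mu_R (z : List Bool) (a l p m : ℕ) (hp : p % 2 = 1)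
    (hw : Win (mu z) a l p)
    (h : (a ≤ 2*m+1 ∧ 2*m+2+p < a+l) ∨ (a + p ≤ 2*m+1 ∧ 2*m+2 < a+l)) :
    z.getD m false = z.getD (m+1) false := by
  obtain ⟨hlen, hper⟩ := hw
  rw [mu_length] at hlen
  rcases h with ⟨h1, h2⟩ | ⟨h1, h2⟩
  · -- forward: T = 2m+1+p even
    have e1 := hper (2*m+1) h1 (by omega)
    have e2 := hper (2*m+2) (by omega) (by omega)
    rw [mu_getD z (2*m+1) (by omega), mu_getD z (2*m+1+p) (by omega)] at e1
    rw [mu_getD z (2*m+2) (by omega), mu_getD z (2*m+2+p) (by omega)] at e2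
    have p1 : (2*m+1) % 2 = 1 := by omega
    have p2 : (2*m+1+p) % 2 = 0 := by omega
    have p3 : (2*m+2) % 2 = 0 := by omega
    have p4 : (2*m+2+p) % 2 = 1 := by omega
    have q1 : (2*m+1) / 2 = m := by omega
    have q3 : (2*m+2) / 2 = m + 1 := by omega
    have q24 : (2*m+2+p) / 2 = (2*m+1+p) / 2 := by omega
    rw [p1, p2, q1] at e1
    rw [p3, p4, q3, q24] at e2
    cases c1 : z.getD m false <;> cases c2 : z.getD (m+1) false <;>
      cases c3 : z.getD ((2*m+1+p)/2) false <;> simp_all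
  · -- backward: T = 2m+1-p even
    have hT : p ≤ 2*m+1 := by omega
    have e1 := hper (2*m+1-p) (by omega) (by omega)
    have e2 := hper (2*m+2-p) (by omega) (by omega)
    have r1 : 2*m+1-p+p = 2*m+1 := by omega
    have r2 : 2*m+2-p+p = 2*m+2 := by omega
    rw [r1] at e1
    rw [r2] at e2
    rw [mu_getD z (2*m+1) (by omega), mu_getD z (2*m+1-p) (by omega)] at e1
    rw [mu_getD z (2*m+2) (by omega), mu_getD z (2*m+2-p) (by omega)] at e2
    have p1 : (2*m+1) % 2 = 1 := by omega
    have p2 : (2*m+1-p) % 2 = 0 := by omega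
    have p3 : (2*m+2) % 2 = 0 := by omega
    have p4 : (2*m+2-p) % 2 = 1 := by omega
    have q1 : (2*m+1) / 2 = m := by omega
    have q3 : (2*m+2) / 2 = m + 1 := by omega
    have q24 : (2*m+2-p) / 2 = (2*m+1-p) / 2 := by omega
    rw [p1, p2, q1] at e1
    rw [p3, p4, q3, q24] at e2
    cases c1 : z.getD m false <;> cases c2 : z.getD (m+1) false <;>
      cases c3 : z.getD ((2*m+1-p)/2) false <;> simp_all

/-- De-substitution for odd periods `p ≥ 3`: a window of `mu z` with odd period
`p` and length `≥ 2p+1` forces three consecutive equal letters in `z`. -/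
lemma mu_win_odd (z : List Bool) (a l p : ℕ) (hp : p % 2 = 1) (hp3 : 3 ≤ p)
    (hl : 2*p + 1 ≤ l) (hw : Win (mu z) a l p) :
    ∃ m, (a + p - 2)/2 ≤ m ∧ m + 3 ≤ z.length ∧
      z.getD m false = z.getD (m+1) false ∧
      z.getD (m+1) false = z.getD (m+2) false := by
  have hlen : a + l ≤ 2 * z.length := by
    have := hw.1; rw [mu_length] at this; exact this
  rcases Nat.even_or_odd a with ha | ha
  · have ha' : a % 2 = 0 := by
      rcases ha with ⟨c, hc⟩; omega
    refine ⟨(a+p-1)/2, by omega, by omega, ?_, ?_⟩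
    · exact mu_R z a l p _ hp hw (Or.inr ⟨by omega, by omega⟩)
    · have e := mu_R z a l p ((a+p-1)/2 + 1) hp hw (Or.inr ⟨by omega, by omega⟩)
      simpa using e
  · have ha' : a % 2 = 1 := by
      rcases ha with ⟨c, hc⟩; omega
    refine ⟨(a+p-2)/2, le_refl _, by omega, ?_, ?_⟩
    · exact mu_R z a l p _ hp hw (Or.inl ⟨by omega, by omega⟩)
    · have e := mu_R z a l p ((a+p-2)/2 + 1) hp hw (Or.inr ⟨by omega, by omega⟩)
      simpa using e

/-- No window of `mu z` with period 1 and length `≥ 3`. -/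
lemma mu_win_one (z : List Bool) (a l : ℕ) (hl : 3 ≤ l) (hw : Win (mu z) a l 1) :
    False := by
  obtain ⟨hlen, hper⟩ := hw
  rw [mu_length] at hlen
  rcases Nat.even_or_odd a with ha | ha
  · have ha' : a % 2 = 0 := by rcases ha with ⟨c, hc⟩; omega
    have e := hper a (le_refl _) (by omega)
    exact mu_adj z a (by omega) (by omega) e
  · have ha' : a % 2 = 1 := by rcases ha with ⟨c, hc⟩; omega
    have e := hper (a+1) (by omega) (by omega)
    have h2 : a + 1 + 1 = a + 2 := by omega
    exact mu_adj z (a+1) (by omega) (by omega) e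

/-- The morphism μ preserves 7/3-power-freeness. -/
lemma WFree_mu {z : List Bool} (hz : WFree z) : WFree (mu z) := by
  intro a l p hp hw
  by_contra hcon
  have hge : 7 * p ≤ 3 * l := by omega
  rcases Nat.even_or_odd p with hpe | hpo
  · -- p even
    obtain ⟨q, rfl⟩ : ∃ q, p = 2*q := by
      rcases hpe with ⟨c, hc⟩; exact ⟨c, by omega⟩
    have hq : 1 ≤ q := by omega
    obtain ⟨m, hm, hwin⟩ := mu_win_even z a l q hq (by omega) hw
    have := hz (a/2) m q hq hwin
    omega
  · have hpo' : p % 2 = 1 := by rcases hpo with ⟨c, hc⟩; omega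
    rcases Nat.lt_or_ge p 3 with h3 | h3
    · -- p = 1
      have hp1 : p = 1 := by omega
      exact mu_win_one z a l (by omega) (hp1 ▸ hw)
    · -- p odd ≥ 3
      obtain ⟨m, _, hm3, e1, e2⟩ := mu_win_odd z a l p hpo' h3 (by omega) hw
      have := hz m 3 1 (le_refl _) ⟨hm3, by
        intro i hi hip
        have : i = m ∨ i = m + 1 := by omega
        rcases this with rfl | rfl
        · simpa using e1
        · simpa using e2⟩
      omega

/-- The key step: if `w` is free, starts with `0`, and prefixes of `0·w` admit
no 7/3-powers except `000`, then the same holds for `0·μ²(w)`. -/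
lemma step (w : List Bool) (hw1 : 1 ≤ w.length) (hw0 : w.getD 0 false = false)
    (hfree : WFree w)
    (hii : ∀ r m, 1 ≤ r → Win (false :: w) 0 m r → 3*m < 7*r ∨ (r = 1 ∧ m ≤ 3)) :
    WFree (false :: mu (mu w)) ∧
      (∀ r m, 1 ≤ r → Win (false :: false :: mu (mu w)) 0 m r →
        3*m < 7*r ∨ (r = 1 ∧ m ≤ 3)) := by
  have hWlen : (false :: mu (mu w)).length = 1 + 4 * w.length := by
    simp [mu_length]; ring
  -- explicit small letters
  have hW0 : (false :: mu (mu w)).getD 0 false = false := rfl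
  have hW1 : (false :: mu (mu w)).getD 1 false = false := by
    show (mu (mu w)).getD 0 false = false
    rw [mu_getD _ 0 (by rw [mu_length]; omega)]
    simp only [Nat.zero_mod, Nat.zero_div, if_pos rfl]
    rw [mu_getD _ 0 (by omega)]
    simpa using hw0
  have hW2 : (false :: mu (mu w)).getD 2 false = true := by
    show (mu (mu w)).getD 1 false = true
    rw [mu_getD _ 1 (by rw [mu_length]; omega)]
    simp only [if_neg (by omega : ¬ (1 % 2 = 0))]
    rw [(by omega : (1:ℕ)/2 = 0), mu_getD _ 0 (by omega)]
    simp only [Nat.zero_mod, Nat.zero_div, if_pos rfl]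
    rw [hw0]
    rfl
  have hW3 : (false :: mu (mu w)).getD 3 false = true := by
    show (mu (mu w)).getD 2 false = true
    rw [mu_getD _ 2 (by rw [mu_length]; omega)]
    simp only [(by omega : (2:ℕ) % 2 = 0), if_pos rfl, (by omega : (2:ℕ)/2 = 1)]
    rw [mu_getD _ 1 (by omega)]
    simp only [if_neg (by omega : ¬ (1 % 2 = 0))]
    rw [(by omega : (1:ℕ)/2 = 0), hw0]
    rfl
  have hmufree : WFree (mu (mu w)) := WFree_mu (WFree_mu hfree)
  have hWfree : WFree (false :: mu (mu w)) := by
    intro a l p hp hwin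
    match a with
    | a' + 1 => exact hmufree a' l p hp (win_tail hwin)
    | 0 =>
      by_contra hcon
      have hge : 7 * p ≤ 3 * l := by omega
      have hlenl : l ≤ 1 + 4 * w.length := by
        have := hwin.1; omega
      rcases Nat.lt_or_ge p 3 with hsmall | hp3
      · interval_cases p
        · -- p = 1
          have e := hwin.2 1 (by omega) (by omega)
          rw [hW1, (by omega : (1:ℕ) + 1 = 2), hW2] at e
          exact absurd e (by simp)
        · -- p = 2
          have e := hwin.2 1 (by omega) (by omega)
          rw [hW1, (by omega : (1:ℕ) + 2 = 3), hW3] at e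
          exact absurd e (by simp)
      · -- p ≥ 3
        have hl2 : 2*p + 1 ≤ l := by omega
        have hWp : (false :: mu (mu w)).getD p false = false := by
          have e := hwin.2 0 (Nat.zero_le _) (by omega)
          simp only [Nat.zero_add] at e
          rw [← e]; exact hW0
        have hWp1 : (false :: mu (mu w)).getD (p+1) false = false := by
          have e := hwin.2 1 (by omega) (by omega)
          rw [(by omega : (1:ℕ) + p = p + 1)] at e
          rw [← e]; exact hW1
        -- p must be even
        have hpe : p % 2 = 0 := by
          by_contra hodd
          obtain ⟨k, rfl⟩ : ∃ k, p = k + 1 := ⟨p - 1, by omega⟩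
          have hk : k % 2 = 0 := by omega
          have e1 : (mu (mu w)).getD k false = false := hWp
          have e2 : (mu (mu w)).getD (k+1) false = false := hWp1
          exact mu_adj (mu w) k hk (by rw [mu_length]; omega) (by rw [e1, e2])
        obtain ⟨q, rfl⟩ : ∃ q, p = 2*q := ⟨p/2, by omega⟩
        have hq2 : 2 ≤ q := by omega
        -- transfer to a window of mu (true :: mu w) at position 1
        have hmu1 : mu (true :: mu w) = true :: false :: mu (mu w) := by
          rw [mu_cons]; rfl
        have hwin1 : Win (mu (true :: mu w)) 1 l (2*q) := by
          rw [hmu1]; exact win_cons hwin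
        obtain ⟨m₁, hm₁, hwinA⟩ := mu_win_even (true :: mu w) 1 l q (by omega)
          (by omega) hwin1
        rw [(by omega : (1:ℕ)/2 = 0)] at hwinA
        have hm₁3 : 7 * q ≤ 3 * m₁ := by omega
        have hm₁len : m₁ ≤ 1 + 2 * w.length := by
          have := hwinA.1
          simp only [List.length_cons, mu_length, Nat.zero_add] at this
          omega
        -- transfer to a window of mu (false :: w) at position 1
        have hmu2 : mu (false :: w) = false :: true :: mu w := by
          rw [mu_cons]; rfl
        have hwin2 : Win (mu (false :: w)) 1 m₁ q := by
          rw [hmu2]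
          exact win_cons hwinA
        rcases Nat.even_or_odd q with hqe | hqo
        · -- q even, q = 2r
          obtain ⟨r, rfl⟩ : ∃ r, q = 2*r := by
            rcases hqe with ⟨c, hc⟩; exact ⟨c, by omega⟩
          have hr : 1 ≤ r := by omega
          obtain ⟨m₂, hm₂, hwinB⟩ := mu_win_even (false :: w) 1 m₁ r (by omega)
            (by omega) hwin2
          rw [(by omega : (1:ℕ)/2 = 0)] at hwinB
          rcases hii r m₂ hr hwinB with hlt | ⟨hr1, hm3⟩
          · omega
          · omega
        · -- q odd (≥ 3)
          have hqo' : q % 2 = 1 := by rcases hqo with ⟨c, hc⟩; omega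
          have hq3 : 3 ≤ q := by omega
          obtain ⟨m₀, hm₀ge, hm₀len, e1, e2⟩ := mu_win_odd (false :: w) 1 m₁ q
            hqo' hq3 (by omega) hwin2
          have hm₀1 : 1 ≤ m₀ := by omega
          obtain ⟨k, rfl⟩ : ∃ k, m₀ = k + 1 := ⟨m₀ - 1, by omega⟩
          rw [List.getD_cons_succ, List.getD_cons_succ] at e1
          have e2' : w.getD (k+1) false = w.getD (k+2) false := by
            have : (false :: w).getD (k+2) false = (false :: w).getD (k+3) false := by
              simpa using e2
            rw [List.getD_cons_succ, List.getD_cons_succ] at this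
            exact this
          have hwlen : k + 3 ≤ w.length := by
            simp only [List.length_cons] at hm₀len; omega
          have hfk := hfree k 3 1 (le_refl _) ⟨by omega, by
            intro i hi hip
            have : i = k ∨ i = k + 1 := by omega
            rcases this with rfl | rfl
            · simpa using e1
            · simpa using e2'⟩
          omega
  refine ⟨hWfree, ?_⟩
  -- prefixes of 0·0·μ²(w)
  intro r m hr hwinm
  by_contra hcon
  push_neg at hcon
  obtain ⟨hge', hcon2⟩ := hcon
  have hge : 7 * r ≤ 3 * m := by omega
  have hVlen : m ≤ 2 + 4 * w.length := by
    have := hwinm.1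
    simp only [List.length_cons, mu_length] at this
    omega
  have hV0 : (false :: false :: mu (mu w)).getD 0 false = false := rfl
  have hV1 : (false :: false :: mu (mu w)).getD 1 false = false := rfl
  have hV2 : (false :: false :: mu (mu w)).getD 2 false = false := hW1
  have hV3 : (false :: false :: mu (mu w)).getD 3 false = true := hW2
  rcases Nat.lt_or_ge r 3 with hsmall | hr3
  · interval_cases r
    · -- r = 1, so m ≥ 4
      have hm4 : 4 ≤ m := by have := hcon2 rfl; omega
      have e := hwinm.2 2 (by omega) (by omega)
      rw [hV2, (by omega : (2:ℕ) + 1 = 3), hV3] at e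
      exact absurd e (by simp)
    · -- r = 2, m ≥ 5
      have e := hwinm.2 1 (by omega) (by omega)
      rw [hV1, (by omega : (1:ℕ) + 2 = 3), hV3] at e
      exact absurd e (by simp)
  · -- r ≥ 3, m ≥ r + 3
    have hm : r + 3 ≤ m := by omega
    have E0 : (false :: false :: mu (mu w)).getD r false = false := by
      have e := hwinm.2 0 (Nat.zero_le _) (by omega)
      simp only [Nat.zero_add] at e
      rw [← e]; exact hV0
    have E1 : (false :: false :: mu (mu w)).getD (r+1) false = false := by
      have e := hwinm.2 1 (by omega) (by omega)
      rw [(by omega : (1:ℕ) + r = r + 1)] at e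
      rw [← e]; exact hV1
    have E2 : (false :: false :: mu (mu w)).getD (r+2) false = false := by
      have e := hwinm.2 2 (by omega) (by omega)
      rw [(by omega : (2:ℕ) + r = r + 2)] at e
      rw [← e]; exact hV2
    obtain ⟨k, rfl⟩ : ∃ k, r = k + 2 := ⟨r - 2, by omega⟩
    have F0 : (mu (mu w)).getD k false = false := E0
    have F1 : (mu (mu w)).getD (k+1) false = false := by
      have : (false :: false :: mu (mu w)).getD (k+3) false = false := by
        simpa using E1
      exact this
    have F2 : (mu (mu w)).getD (k+2) false = false := by
      have : (false :: false :: mu (mu w)).getD (k+4) false = false := by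
        simpa using E2
      exact this
    have hb : k + 2 < 4 * w.length := by omega
    rcases Nat.even_or_odd k with hke | hko
    · have hk' : k % 2 = 0 := by rcases hke with ⟨c, hc⟩; omega
      exact mu_adj (mu w) k hk' (by rw [mu_length]; omega) (by rw [F0, F1])
    · have hk' : (k+1) % 2 = 0 := by rcases hko with ⟨c, hc⟩; omega
      have := mu_adj (mu w) (k+1) hk' (by rw [mu_length]; omega)
      rw [F1, (by omega : k + 1 + 1 = k + 2), F2] at this
      exact this rfl

lemma getD_append_mid (s u t : List Bool) (j : ℕ) (hj : j < u.length) :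
    (s ++ u ++ t).getD (s.length + j) false = u.getD j false := by
  rw [List.append_assoc, List.getD_append_right _ _ _ _ (by omega),
    Nat.add_sub_cancel_left, List.getD_append _ _ _ _ hj]

lemma A_inv (n : ℕ) :
    (1 ≤ (A n).length ∧ (A n).getD 0 false = false) ∧ WFree (A n) ∧
      (∀ r m, 1 ≤ r → Win (false :: A n) 0 m r → 3*m < 7*r ∨ (r = 1 ∧ m ≤ 3)) := by
  induction n with
  | zero =>
    refine ⟨⟨by simp [A], rfl⟩, ?_, ?_⟩
    · intro a l p hp hwin
      have := hwin.1
      simp only [A, List.length_cons, List.length_nil] at this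
      omega
    · intro r m hr hwin
      have hm : m ≤ 3 := by
        have := hwin.1
        simp only [A, List.length_cons, List.length_nil] at this
        omega
      rcases Nat.lt_or_ge r 2 with h | h
      · right; exact ⟨by omega, hm⟩
      · left; omega
  | succ n ih =>
    obtain ⟨⟨h1, h0⟩, hfree, hii⟩ := ih
    have hs := step (A n) h1 h0 hfree hii
    have hA : A (n+1) = false :: mu (mu (A n)) := rfl
    refine ⟨⟨by rw [hA]; simp, by rw [hA]; rfl⟩, by rw [hA]; exact hs.1,
      by rw [hA]; exact hs.2⟩

theorem A_seven_thirds_free (n : ℕ) :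
    ∀ u p, u <:+: A n → 1 ≤ p → HasPeriod u p → 3 * u.length < 7 * p := by
  intro u p hinf hp hper
  obtain ⟨s, t, hst⟩ := hinf
  have hfree := (A_inv n).2.1
  apply hfree s.length u.length p hp
  constructor
  · rw [← hst]; simp
  · intro i hi hip
    obtain ⟨j, rfl⟩ : ∃ j, i = s.length + j := ⟨i - s.length, by omega⟩
    have hj : j < u.length := by omega
    have hjp : j + p < u.length := by omega
    rw [← hst, getD_append_mid s u t j hj,
      (by omega : s.length + j + p = s.length + (j + p)),
      getD_append_mid s u t (j+p) hjp]
    exact hper j hjp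
end
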